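/- Let μ be a finite Borel measure on ℝ supported in [−1,1] with μ({−1,1}) = 0, and suppose that for every k ∈ ℕ one has ∫ t^{2k} dμ(t) ≤ C_k / 4^k, where C_k is the k-th Catalan number. Then the function t ↦ log(1 − t²)/(1 − t²) is μ-integrable on (−1,1); in particular ∫ log(1 − t²)/(1 − t²) dμ(t) > −∞. -/

import Mathlib

open MeasureTheory
open scoped ENNReal

lemma aux_cbsq (m : ℕ) : (Nat.centralBinom m) ^ 2 * (2 * m + 1) ≤ 16 ^ m := by
  induction m with
  | zero => simp [Nat.centralBinom]
  | succ m ih =>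
    have key := Nat.succ_mul_centralBinom_succ m
    have h1 : (m + 1) ^ 2 * ((Nat.centralBinom (m + 1)) ^ 2 * (2 * (m + 1) + 1))
        ≤ (m + 1) ^ 2 * 16 ^ (m + 1) := by
      have e : (m + 1) ^ 2 * ((Nat.centralBinom (m + 1)) ^ 2 * (2 * (m + 1) + 1))
          = (2 * (2 * m + 1) * Nat.centralBinom m) ^ 2 * (2 * m + 3) := by
        rw [← key]; ring
      rw [e]
      calc (2 * (2 * m + 1) * Nat.centralBinom m) ^ 2 * (2 * m + 3)
          = (4 * (2 * m + 1) * (2 * m + 3)) * ((Nat.centralBinom m) ^ 2 * (2 * m + 1)) := by ring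
        _ ≤ (4 * (2 * m + 1) * (2 * m + 3)) * 16 ^ m := Nat.mul_le_mul_left _ ih
        _ ≤ (16 * (m + 1) ^ 2) * 16 ^ m := Nat.mul_le_mul_right _ (by nlinarith)
        _ = (m + 1) ^ 2 * 16 ^ (m + 1) := by ring
    exact Nat.le_of_mul_le_mul_left h1 (by positivity)

lemma aux_catalan (m : ℕ) : ((catalan m : ℝ)) / 4 ^ m ≤ ((m : ℝ) + 1) ^ (-(3 / 2 : ℝ)) := by
  have hcb : ((m : ℝ) + 1) * (catalan m : ℝ) = (Nat.centralBinom m : ℝ) := by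
    exact_mod_cast congrArg (Nat.cast : ℕ → ℝ) (succ_mul_catalan_eq_centralBinom m)
  have h16 : ((Nat.centralBinom m : ℝ)) ^ 2 * (2 * (m : ℝ) + 1) ≤ 16 ^ m := by
    exact_mod_cast aux_cbsq m
  have hs : (0 : ℝ) < Real.sqrt (2 * (m : ℝ) + 1) := Real.sqrt_pos.mpr (by positivity)
  have hcb' : (Nat.centralBinom m : ℝ) * Real.sqrt (2 * (m : ℝ) + 1) ≤ 4 ^ m := by
    have h2 : ((Nat.centralBinom m : ℝ) * Real.sqrt (2 * (m : ℝ) + 1)) ^ 2 ≤ ((4 : ℝ) ^ m) ^ 2 := by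
      rw [mul_pow, Real.sq_sqrt (by positivity)]
      calc (Nat.centralBinom m : ℝ) ^ 2 * (2 * (m : ℝ) + 1) ≤ (16 : ℝ) ^ m := h16
        _ = ((4 : ℝ) ^ m) ^ 2 := by rw [← pow_mul, mul_comm, pow_mul]; norm_num
    have hb : (0 : ℝ) ≤ (4 : ℝ) ^ m := by positivity
    nlinarith [mul_nonneg (Nat.cast_nonneg (Nat.centralBinom m) : (0:ℝ) ≤ _) hs.le]
  have hpow : ((m : ℝ) + 1) ^ (-(3 / 2 : ℝ)) = (((m : ℝ) + 1) * Real.sqrt ((m : ℝ) + 1))⁻¹ := by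
    rw [Real.rpow_neg (by positivity)]
    congr 1
    rw [show (3 / 2 : ℝ) = 1 + 1 / 2 by norm_num, Real.rpow_add (by positivity), Real.rpow_one,
      Real.sqrt_eq_rpow]
  have hcat : (catalan m : ℝ) = (Nat.centralBinom m : ℝ) / ((m : ℝ) + 1) := by
    field_simp
    linarith [hcb]
  rw [hpow, hcat, div_div, inv_eq_one_div, div_le_div_iff₀ (by positivity) (by positivity)]
  have hs2 : Real.sqrt ((m : ℝ) + 1) ≤ Real.sqrt (2 * (m : ℝ) + 1) := Real.sqrt_le_sqrt (by linarith)
  calc (Nat.centralBinom m : ℝ) * (((m : ℝ) + 1) * Real.sqrt ((m : ℝ) + 1))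
      ≤ (Nat.centralBinom m : ℝ) * (((m : ℝ) + 1) * Real.sqrt (2 * (m : ℝ) + 1)) := by
        gcongr
    _ = ((m : ℝ) + 1) * ((Nat.centralBinom m : ℝ) * Real.sqrt (2 * (m : ℝ) + 1)) := by ring
    _ ≤ ((m : ℝ) + 1) * 4 ^ m := by gcongr
    _ = 1 * (((m : ℝ) + 1) * 4 ^ m) := by ring

lemma aux_harmonic (m : ℕ) (hm : 1 ≤ m) : (harmonic m : ℝ) ≤ 5 * (m : ℝ) ^ ((1 : ℝ) / 4) := by
  have hm1 : (1 : ℝ) ≤ (m : ℝ) := by exact_mod_cast hm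
  have h1 := harmonic_le_one_add_log m
  have hpos : (0 : ℝ) < (m : ℝ) := by linarith
  have hlr := Real.log_rpow hpos ((1 : ℝ) / 4)
  have h2 : Real.log ((m : ℝ) ^ ((1 : ℝ) / 4)) ≤ (m : ℝ) ^ ((1 : ℝ) / 4) := by
    have := Real.log_le_sub_one_of_pos (show (0:ℝ) < (m : ℝ) ^ ((1 : ℝ) / 4) by positivity)
    linarith
  have hone : (1 : ℝ) ≤ (m : ℝ) ^ ((1 : ℝ) / 4) := Real.one_le_rpow hm1 (by norm_num)
  have hq : Real.log (m : ℝ) ≤ 4 * (m : ℝ) ^ ((1 : ℝ) / 4) := by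
    rw [hlr] at h2; linarith
  linarith

lemma aux_term (n : ℕ) :
    (harmonic (n + 1) : ℝ) * ((catalan (n + 1) : ℝ) / 4 ^ (n + 1))
      ≤ 5 * ((n : ℝ) + 2) ^ (-(5 / 4 : ℝ)) := by
  have h1 : (harmonic (n + 1) : ℝ) ≤ 5 * ((n : ℝ) + 1) ^ ((1 : ℝ) / 4) := by
    have := aux_harmonic (n + 1) (Nat.le_add_left 1 n)
    push_cast at this ⊢
    exact this
  have h2 : (catalan (n + 1) : ℝ) / 4 ^ (n + 1) ≤ ((n : ℝ) + 2) ^ (-(3 / 2 : ℝ)) := by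
    have := aux_catalan (n + 1)
    push_cast at this
    rw [show ((n : ℝ) + 1 + 1) = (n : ℝ) + 2 by ring] at this
    exact this
  have hc0 : (0 : ℝ) ≤ (catalan (n + 1) : ℝ) / 4 ^ (n + 1) := by positivity
  have hh0 : (0 : ℝ) ≤ (harmonic (n + 1) : ℝ) := by
    exact_mod_cast (harmonic_pos (Nat.succ_ne_zero n)).le
  have e : ((n : ℝ) + 2) ^ ((1 : ℝ) / 4) * ((n : ℝ) + 2) ^ (-(3 / 2 : ℝ))
      = ((n : ℝ) + 2) ^ (-(5 / 4 : ℝ)) := by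
    rw [← Real.rpow_add (by positivity)]; norm_num
  calc (harmonic (n + 1) : ℝ) * ((catalan (n + 1) : ℝ) / 4 ^ (n + 1))
      ≤ (5 * ((n : ℝ) + 1) ^ ((1 : ℝ) / 4)) * (((n : ℝ) + 2) ^ (-(3 / 2 : ℝ))) := by
        apply mul_le_mul h1 h2 hc0 (by positivity)
    _ ≤ (5 * ((n : ℝ) + 2) ^ ((1 : ℝ) / 4)) * (((n : ℝ) + 2) ^ (-(3 / 2 : ℝ))) := by
        gcongr
        linarith
    _ = 5 * ((n : ℝ) + 2) ^ (-(5 / 4 : ℝ)) := by rw [mul_assoc, e]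

lemma aux_summable : Summable (fun n : ℕ => 5 * ((n : ℝ) + 2) ^ (-(5 / 4 : ℝ))) := by
  have h0 : Summable (fun n : ℕ => ((n : ℝ)) ^ (-(5 / 4 : ℝ))) :=
    Real.summable_nat_rpow.mpr (by norm_num)
  have h2 : Summable (fun n : ℕ => (((n + 2 : ℕ) : ℝ)) ^ (-(5 / 4 : ℝ))) :=
    (summable_nat_add_iff 2).mpr h0
  have h3 : Summable (fun n : ℕ => ((n : ℝ) + 2) ^ (-(5 / 4 : ℝ))) := by
    refine h2.congr fun n => ?_
    push_cast
    ring_nf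
  exact h3.mul_left 5

lemma aux_hassum (t : ℝ) (ht : t ∈ Set.Ioo (-1 : ℝ) 1) :
    HasSum (fun n : ℕ => (harmonic (n + 1) : ℝ) * t ^ (2 * (n + 1)))
      ‖Real.log (1 - t ^ 2) / (1 - t ^ 2)‖ := by
  obtain ⟨ht1, ht2⟩ := ht
  set x := t ^ 2 with hxdef
  have hx0 : (0 : ℝ) ≤ x := sq_nonneg t
  have hx1 : x < 1 := by nlinarith
  have hax : |x| < 1 := by rw [abs_of_nonneg hx0]; exact hx1
  have hgeo := summable_geometric_of_lt_one hx0 hx1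
  have hf : Summable fun k : ℕ => ‖x ^ (k + 1) / ((k : ℝ) + 1)‖ := by
    refine Summable.of_nonneg_of_le (fun k => norm_nonneg _) (fun k => ?_) hgeo
    rw [Real.norm_eq_abs, abs_of_nonneg (by positivity)]
    calc x ^ (k + 1) / ((k : ℝ) + 1) ≤ x ^ (k + 1) := by
          apply div_le_self (by positivity)
          have : (0 : ℝ) ≤ (k : ℝ) := Nat.cast_nonneg k
          linarith
      _ ≤ x ^ k := pow_le_pow_of_le_one hx0 hx1.le (Nat.le_succ k)
  have hg : Summable fun k : ℕ => ‖x ^ k‖ := by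
    refine hgeo.congr fun k => ?_
    rw [Real.norm_eq_abs, abs_of_nonneg (pow_nonneg hx0 k)]
  have H := hasSum_sum_range_mul_of_summable_norm hf hg
  have e1 : (∑' k : ℕ, x ^ (k + 1) / ((k : ℝ) + 1)) = -Real.log (1 - x) := by
    exact_mod_cast (Real.hasSum_pow_div_log_of_abs_lt_one hax).tsum_eq
  have e2 : (∑' k : ℕ, x ^ k) = (1 - x)⁻¹ := tsum_geometric_of_lt_one hx0 hx1
  rw [e1, e2] at H
  have hfun : (fun n : ℕ => ∑ k ∈ Finset.range (n + 1), x ^ (k + 1) / ((k : ℝ) + 1) * x ^ (n - k))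
      = fun n : ℕ => (harmonic (n + 1) : ℝ) * t ^ (2 * (n + 1)) := by
    funext n
    have hterm : ∀ k ∈ Finset.range (n + 1),
        x ^ (k + 1) / ((k : ℝ) + 1) * x ^ (n - k) = (((k : ℝ) + 1))⁻¹ * x ^ (n + 1) := by
      intro k hk
      rw [Finset.mem_range, Nat.lt_succ_iff] at hk
      rw [div_mul_eq_mul_div, ← pow_add, show k + 1 + (n - k) = n + 1 by omega,
        div_eq_inv_mul]
    rw [Finset.sum_congr rfl hterm, ← Finset.sum_mul]
    have hh : (harmonic (n + 1) : ℝ) = ∑ k ∈ Finset.range (n + 1), (((k : ℝ) + 1))⁻¹ := by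
      rw [harmonic]
      push_cast
      rfl
    rw [hh, hxdef, ← pow_mul]
  have hlog : Real.log (1 - x) ≤ 0 := Real.log_nonpos (by linarith) (by linarith)
  have hval : -Real.log (1 - x) * (1 - x)⁻¹ = ‖Real.log (1 - t ^ 2) / (1 - t ^ 2)‖ := by
    rw [Real.norm_eq_abs, ← hxdef,
      abs_of_nonpos (div_nonpos_of_nonpos_of_nonneg hlog (by linarith)), div_eq_mul_inv]
    ring
  rw [hval] at H
  exact hfun ▸ H

/-- If `μ` is a finite Borel measure supported in `[-1,1]` with `μ {−1,1} = 0` whose even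
moments are dominated by `C_k / 4^k` (Catalan numbers), then `t ↦ log(1−t²)/(1−t²)` is
`μ`-integrable on `(-1,1)`. -/
theorem integrable_log_one_sub_sq_div (μ : Measure ℝ) [IsFiniteMeasure μ]
    (hsupp : μ (Set.Icc (-1 : ℝ) 1)ᶜ = 0) (hpt : μ {(-1 : ℝ), 1} = 0)
    (hmom : ∀ k : ℕ, ∫⁻ t, ENNReal.ofReal (t ^ (2 * k)) ∂μ ≤
      ENNReal.ofReal ((catalan k : ℝ) / 4 ^ k)) :
    IntegrableOn (fun t : ℝ => Real.log (1 - t ^ 2) / (1 - t ^ 2)) (Set.Ioo (-1 : ℝ) 1) μ := by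
  have hmeasf : Measurable fun t : ℝ => Real.log (1 - t ^ 2) / (1 - t ^ 2) :=
    (Real.measurable_log.comp (measurable_const.sub (measurable_id.pow_const 2))).div
      (measurable_const.sub (measurable_id.pow_const 2))
  refine ⟨hmeasf.aestronglyMeasurable.restrict, ?_⟩
  rw [hasFiniteIntegral_iff_norm]
  have hh0 : ∀ n : ℕ, (0 : ℝ) ≤ (harmonic (n + 1) : ℝ) := fun n => by
    exact_mod_cast (harmonic_pos (Nat.succ_ne_zero n)).le
  have hFnn : ∀ (n : ℕ) (t : ℝ), (0 : ℝ) ≤ (harmonic (n + 1) : ℝ) * t ^ (2 * (n + 1)) := by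
    intro n t
    have : (0 : ℝ) ≤ t ^ (2 * (n + 1)) := by
      rw [pow_mul]; positivity
    exact mul_nonneg (hh0 n) this
  have hcongr : ∫⁻ t in Set.Ioo (-1 : ℝ) 1,
        ENNReal.ofReal ‖Real.log (1 - t ^ 2) / (1 - t ^ 2)‖ ∂μ
      = ∫⁻ t in Set.Ioo (-1 : ℝ) 1,
        ∑' n : ℕ, ENNReal.ofReal ((harmonic (n + 1) : ℝ) * t ^ (2 * (n + 1))) ∂μ := by
    refine setLIntegral_congr_fun measurableSet_Ioo (fun t ht => ?_)
    have hs := aux_hassum t ht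
    rw [← hs.tsum_eq, ENNReal.ofReal_tsum_of_nonneg (fun n => hFnn n t) hs.summable]
  rw [hcongr, lintegral_tsum (fun n =>
    (show Measurable fun t : ℝ => ENNReal.ofReal ((harmonic (n + 1) : ℝ) * t ^ (2 * (n + 1))) from
      ((measurable_id.pow_const (2 * (n + 1))).const_mul _).ennreal_ofReal).aemeasurable)]
  have hbound : ∀ n : ℕ,
      ∫⁻ t in Set.Ioo (-1 : ℝ) 1,
          ENNReal.ofReal ((harmonic (n + 1) : ℝ) * t ^ (2 * (n + 1))) ∂μ
        ≤ ENNReal.ofReal (5 * ((n : ℝ) + 2) ^ (-(5 / 4 : ℝ))) := by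
    intro n
    calc ∫⁻ t in Set.Ioo (-1 : ℝ) 1,
            ENNReal.ofReal ((harmonic (n + 1) : ℝ) * t ^ (2 * (n + 1))) ∂μ
        ≤ ∫⁻ t, ENNReal.ofReal ((harmonic (n + 1) : ℝ) * t ^ (2 * (n + 1))) ∂μ :=
          setLIntegral_le_lintegral _ _
      _ = ENNReal.ofReal ((harmonic (n + 1) : ℝ)) *
            ∫⁻ t, ENNReal.ofReal (t ^ (2 * (n + 1))) ∂μ := by
          simp_rw [ENNReal.ofReal_mul (hh0 n)]
          exact lintegral_const_mul _
            (show Measurable fun t : ℝ => ENNReal.ofReal (t ^ (2 * (n + 1))) from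
              (measurable_id.pow_const (2 * (n + 1))).ennreal_ofReal)
      _ ≤ ENNReal.ofReal ((harmonic (n + 1) : ℝ)) *
            ENNReal.ofReal ((catalan (n + 1) : ℝ) / 4 ^ (n + 1)) :=
          by gcongr; exact hmom (n + 1)
      _ = ENNReal.ofReal ((harmonic (n + 1) : ℝ) * ((catalan (n + 1) : ℝ) / 4 ^ (n + 1))) :=
          (ENNReal.ofReal_mul (hh0 n)).symm
      _ ≤ ENNReal.ofReal (5 * ((n : ℝ) + 2) ^ (-(5 / 4 : ℝ))) :=
          ENNReal.ofReal_le_ofReal (aux_term n)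
  calc (∑' n : ℕ, ∫⁻ t in Set.Ioo (-1 : ℝ) 1,
          ENNReal.ofReal ((harmonic (n + 1) : ℝ) * t ^ (2 * (n + 1))) ∂μ)
      ≤ ∑' n : ℕ, ENNReal.ofReal (5 * ((n : ℝ) + 2) ^ (-(5 / 4 : ℝ))) :=
        ENNReal.tsum_le_tsum hbound
    _ = ENNReal.ofReal (∑' n : ℕ, 5 * ((n : ℝ) + 2) ^ (-(5 / 4 : ℝ))) :=
        (ENNReal.ofReal_tsum_of_nonneg (fun n => by positivity) aux_summable).symm
    _ < ⊤ := ENNReal.ofReal_lt_top
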